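/- If s = (r,u,v) is a plan-step with both u and v in the same subgraph S_x of the partition, and s is applicable to arrangement a, then γ(a) = γ(s(a)): internal moves do not change the configuration tuple. -/
import Mathlib


open scoped Classical

/-- An arrangement of robots `R` on vertices `V`: an injective partial map `V ⇀ R`. -/
abbrev Arrangement (V R : Type) := V → Option R

/-- Injectivity of an arrangement: no robot occupies two vertices. -/
def ArrInj {V R : Type} (a : Arrangement V R) : Prop :=
  ∀ u v r, a u = some r → a v = some r → u = v

/-- A plan-step `(r, u, v)` is applicable if `r` is at `u`, `v` is unoccupied,
and `(u,v)` is an edge. -/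
def Applicable {V R : Type} (G : SimpleGraph V) (a : Arrangement V R)
    (s : R × V × V) : Prop :=
  G.Adj s.2.1 s.2.2 ∧ a s.2.1 = some s.1 ∧ a s.2.2 = none

/-- Applying a plan-step: move the robot from `u` to `v`. -/
noncomputable def applyStep {V R : Type} (a : Arrangement V R) (s : R × V × V) :
    Arrangement V R :=
  fun w => if w = s.2.2 then some s.1 else if w = s.2.1 then none else a w

/-- `IsPlan G P a b`: the sequence of plan-steps `P` is a valid concrete plan in `G`
transforming arrangement `a` into arrangement `b`. -/
def IsPlan {V R : Type} (G : SimpleGraph V) :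
    List (R × V × V) → Arrangement V R → Arrangement V R → Prop
  | [], a, b => a = b
  | s :: P, a, b => Applicable G a s ∧ IsPlan G P (applyStep a s) b

/-- Mutual reachability by plans confined to the vertex set `S` (an induced
subgraph of `G`). -/
def SimIn {V R : Type} (G : SimpleGraph V) (S : Set V) (a b : Arrangement V R) : Prop :=
  (∃ P : List (R × V × V), (∀ s ∈ P, s.2.1 ∈ S ∧ s.2.2 ∈ S) ∧ IsPlan G P a b) ∧
  (∃ Q : List (R × V × V), (∀ s ∈ Q, s.2.1 ∈ S ∧ s.2.2 ∈ S) ∧ IsPlan G Q b a)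

/-- The configuration (equivalence class) of the arrangement `a` within the
subgraph `S` of `G`. -/
def clsIn {V R : Type} (G : SimpleGraph V) (S : Set V) (a : Arrangement V R) :
    Set (Arrangement V R) :=
  {b | SimIn G S a b}

/-- The arrangement `a ⊖ r`: remove robot `r`. -/
noncomputable def removeR {V R : Type} (a : Arrangement V R) (r : R) : Arrangement V R :=
  fun w => if a w = some r then none else a w

/-- The arrangement `a ⊕ (r, v)`: add robot `r` at vertex `v`. -/
noncomputable def addR {V R : Type} (a : Arrangement V R) (r : R) (v : V) :
    Arrangement V R :=
  fun w => if w = v then some r else a w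

/-- `c ⊖ (r, u)`: the set of configurations obtained from configuration `c` by
removing robot `r` exiting via vertex `u`. -/
def ominusC {V R : Type} (G : SimpleGraph V) (S : Set V)
    (c : Set (Arrangement V R)) (r : R) (u : V) : Set (Set (Arrangement V R)) :=
  {C | ∃ a ∈ c, a u = some r ∧ C = clsIn G S (removeR a r)}

/-- `c ⊕ (r, v)`: the set of configurations obtained from configuration `c` by
adding robot `r` entering at vertex `v`. -/
def oplusC {V R : Type} (G : SimpleGraph V) (S : Set V)
    (c : Set (Arrangement V R)) (r : R) (v : V) : Set (Set (Arrangement V R)) :=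
  {C | ∃ a ∈ c, a v = none ∧ C = clsIn G S (addR a r v)}

/-- The restriction `a / S` of an arrangement to a vertex set. -/
noncomputable def restrictArr {V R : Type} (a : Arrangement V R) (S : Set V) :
    Arrangement V R :=
  fun v => if v ∈ S then a v else none

lemma isPlan_append {V R : Type} (G : SimpleGraph V) :
    ∀ (P Q : List (R × V × V)) (a b c : Arrangement V R),
      IsPlan G P a b → IsPlan G Q b c → IsPlan G (P ++ Q) a c := by
  intro P
  induction P with
  | nil => intro Q a b c h1 h2; cases h1; simpa using h2
  | cons s P ih =>
    intro Q a b c h1 h2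
    exact ⟨h1.1, ih Q _ b c h1.2 h2⟩

lemma simIn_symm {V R : Type} (G : SimpleGraph V) (S : Set V)
    {a b : Arrangement V R} (h : SimIn G S a b) : SimIn G S b a := ⟨h.2, h.1⟩

lemma simIn_trans {V R : Type} (G : SimpleGraph V) (S : Set V)
    {a b c : Arrangement V R} (h1 : SimIn G S a b) (h2 : SimIn G S b c) :
    SimIn G S a c := by
  obtain ⟨⟨P1, hP1, hP1'⟩, ⟨Q1, hQ1, hQ1'⟩⟩ := h1
  obtain ⟨⟨P2, hP2, hP2'⟩, ⟨Q2, hQ2, hQ2'⟩⟩ := h2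
  refine ⟨⟨P1 ++ P2, ?_, isPlan_append G _ _ _ _ _ hP1' hP2'⟩,
    ⟨Q2 ++ Q1, ?_, isPlan_append G _ _ _ _ _ hQ2' hQ1'⟩⟩ <;>
    · intro s hs
      rcases List.mem_append.1 hs with h | h
      · first | exact hP1 s h | exact hQ2 s h
      · first | exact hP2 s h | exact hQ1 s h

lemma clsIn_eq_of_simIn {V R : Type} (G : SimpleGraph V) (S : Set V)
    {a b : Arrangement V R} (h : SimIn G S a b) :
    clsIn G S a = clsIn G S b := by
  ext c
  constructor
  · intro hc; exact simIn_trans G S (simIn_symm G S h) hc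
  · intro hc; exact simIn_trans G S h hc

/-- If `s = (r,u,v)` is a plan-step with both `u` and `v` in the same subgraph
`S x` of the partition, and `s` is applicable to arrangement `a`, then
`γ(a) = γ(s(a))`: internal moves do not change the configuration tuple. -/
theorem internal_move_preserves_configuration {V R : Type} {m : ℕ}
    (G : SimpleGraph V) (S : Fin m → Set V)
    (hdisj : ∀ i j, i ≠ j → Disjoint (S i) (S j))
    (hcover : (⋃ i, S i) = Set.univ)
    (a : Arrangement V R) (r : R) (u v : V) (x : Fin m)
    (hu : u ∈ S x) (hv : v ∈ S x)
    (happ : Applicable G a (r, u, v)) :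
    ∀ i : Fin m,
      clsIn G (S i) (restrictArr a (S i)) =
        clsIn G (S i) (restrictArr (applyStep a (r, u, v)) (S i)) := by
  obtain ⟨hadj, hau, hav⟩ := happ
  have hne : u ≠ v := hadj.ne
  intro i
  by_cases hix : i = x
  · subst hix
    apply clsIn_eq_of_simIn
    have happ1 : Applicable G (restrictArr a (S i)) (r, u, v) := by
      refine ⟨hadj, ?_, ?_⟩ <;> simp [restrictArr, hu, hv, hau, hav]
    have hkey : applyStep (restrictArr a (S i)) (r, u, v) =
        restrictArr (applyStep a (r, u, v)) (S i) := by
      funext w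
      by_cases h1 : w = v
      · subst h1; simp [applyStep, restrictArr, hv]
      · by_cases h2 : w = u
        · subst h2; simp [applyStep, restrictArr, hu, hne, h1]
        · simp [applyStep, restrictArr, h1, h2]
    have happ2 : Applicable G (restrictArr (applyStep a (r, u, v)) (S i)) (r, v, u) := by
      refine ⟨hadj.symm, ?_, ?_⟩ <;>
        simp [restrictArr, applyStep, hu, hv, hne, Ne.symm hne]
    have hkey2 : applyStep (restrictArr (applyStep a (r, u, v)) (S i)) (r, v, u) =
        restrictArr a (S i) := by
      funext w
      by_cases h1 : w = u
      · subst h1; simp [applyStep, restrictArr, hu, hau]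
      · by_cases h2 : w = v
        · subst h2; simp [applyStep, restrictArr, hv, hav, h1]
        · simp [applyStep, restrictArr, h1, h2]
    refine ⟨⟨[(r, u, v)], ?_, happ1, hkey⟩, ⟨[(r, v, u)], ?_, happ2, hkey2⟩⟩ <;>
      simp [hu, hv]
  · have hU : u ∉ S i := fun h => (hdisj i x hix).le_bot ⟨h, hu⟩
    have hV : v ∉ S i := fun h => (hdisj i x hix).le_bot ⟨h, hv⟩
    have heq : restrictArr a (S i) = restrictArr (applyStep a (r, u, v)) (S i) := by
      funext w
      by_cases hw : w ∈ S i
      · have h1 : w ≠ u := fun h => hU (h ▸ hw)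
        have h2 : w ≠ v := fun h => hV (h ▸ hw)
        simp [restrictArr, applyStep, hw, h1, h2]
      · simp [restrictArr, hw]
    rw [heq]
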